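/- (Fatou's lemma for the pan-integral) Let (X, 𝒜, μ) be a monotone measure space with μ continuous from below, let E ∈ 𝒜, and let f_k : E → [0, ∞] be a sequence of measurable functions. Then ∫_E^pan (liminf_{k→∞} f_k) dμ ≤ liminf_{k→∞} ∫_E^pan f_k dμ. -/

import Mathlib

open Set Filter
open scoped ENNReal NNReal Topology

variable {X : Type*}

/-- A monotone measure: vanishes on the empty set, positive on the whole space,
and monotone on measurable sets. -/
structure MonotoneMeasure [MeasurableSpace X] (mu : Set X → ℝ≥0∞) : Prop where
  empty : mu ∅ = 0
  univ_pos : 0 < mu Set.univ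
  mono : ∀ ⦃A B : Set X⦄, MeasurableSet A → MeasurableSet B → A ⊆ B → mu A ≤ mu B

/-- A finite measurable partition of `X`. -/
def IsPanPartition [MeasurableSpace X] {n : ℕ} (A : Fin n → Set X) : Prop :=
  (∀ i, MeasurableSet (A i)) ∧ Pairwise (Function.onFun Disjoint A) ∧ (⋃ i, A i) = Set.univ

/-- The `(+,·)`-based pan-integral of a nonnegative function on `X`. -/
noncomputable def panIntegral [MeasurableSpace X] (mu : Set X → ℝ≥0∞) (f : X → ℝ≥0∞) : ℝ≥0∞ :=
  ⨆ (n : ℕ) (A : Fin n → Set X) (_ : IsPanPartition A) (lam : Fin n → ℝ≥0)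
    (_ : ∀ x, ∑ i, Set.indicator (A i) (fun _ => (lam i : ℝ≥0∞)) x ≤ f x),
    ∑ i, (lam i : ℝ≥0∞) * mu (A i)

/-- The pan-integral of `f` on a set `A`, i.e. the pan-integral of `f·χ_A` on `X`. -/
noncomputable def panIntegralOn [MeasurableSpace X] (mu : Set X → ℝ≥0∞) (f : X → ℝ≥0∞)
    (A : Set X) : ℝ≥0∞ :=
  panIntegral mu (A.indicator f)

/-- Subadditivity of a set function. -/
def PanSubadditive [MeasurableSpace X] (mu : Set X → ℝ≥0∞) : Prop :=
  ∀ ⦃A B : Set X⦄, MeasurableSet A → MeasurableSet B → mu (A ∪ B) ≤ mu A + mu B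

/-- Null-additivity of a set function. -/
def PanNullAdditive [MeasurableSpace X] (mu : Set X → ℝ≥0∞) : Prop :=
  ∀ ⦃A B : Set X⦄, MeasurableSet A → MeasurableSet B → mu B = 0 → mu (A ∪ B) = mu A

/-- Continuity from below of a set function. -/
def PanContinuousFromBelow [MeasurableSpace X] (mu : Set X → ℝ≥0∞) : Prop :=
  ∀ E : ℕ → Set X, (∀ n, MeasurableSet (E n)) → Monotone E →
    Filter.Tendsto (fun n => mu (E n)) Filter.atTop (nhds (mu (⋃ n, E n)))

/-- A real-valued function is pan-integrable if the pan-integrals of its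
positive and negative parts are both finite. -/
def PanIntegrable [MeasurableSpace X] (mu : Set X → ℝ≥0∞) (f : X → ℝ) : Prop :=
  panIntegral mu (fun x => ENNReal.ofReal (f x)) < ⊤ ∧
    panIntegral mu (fun x => ENNReal.ofReal (-f x)) < ⊤

/-- The symmetric pan-integral of a real-valued function:
`∫ f⁺ dμ − ∫ f⁻ dμ`. -/
noncomputable def panIntegralReal [MeasurableSpace X] (mu : Set X → ℝ≥0∞) (f : X → ℝ) : ℝ :=
  (panIntegral mu (fun x => ENNReal.ofReal (f x))).toReal -
    (panIntegral mu (fun x => ENNReal.ofReal (-f x))).toReal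

/-- The `‖·‖_{μ,p}` functional: `(∫_E^pan |f|^p dμ)^(1/p)`. -/
noncomputable def panNorm [MeasurableSpace X] (mu : Set X → ℝ≥0∞) (E : Set X) (p : ℝ)
    (f : X → ℝ) : ℝ≥0∞ :=
  (panIntegralOn mu (fun x => ENNReal.ofReal (|f x| ^ p)) E) ^ (1 / p)

lemma panIntegral_ge [MeasurableSpace X] (mu : Set X → ℝ≥0∞) (g : X → ℝ≥0∞)
    {n : ℕ} {A : Fin n → Set X} (hA : IsPanPartition A) {lam : Fin n → ℝ≥0}
    (hle : ∀ x, ∑ i, Set.indicator (A i) (fun _ => (lam i : ℝ≥0∞)) x ≤ g x) :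
    ∑ i, (lam i : ℝ≥0∞) * mu (A i) ≤ panIntegral mu g := by
  refine le_iSup_of_le n ?_
  refine le_iSup_of_le A ?_
  refine le_iSup_of_le hA ?_
  refine le_iSup_of_le lam ?_
  exact le_iSup_of_le hle le_rfl

theorem panIntegralOn_liminf_le [MeasurableSpace X]
    (mu : Set X → ℝ≥0∞) (hmu : MonotoneMeasure mu) (hcb : PanContinuousFromBelow mu)
    {E : Set X} (hE : MeasurableSet E)
    (f : ℕ → X → ℝ≥0∞) (hf : ∀ k, Measurable (f k)) :
    panIntegralOn mu (fun x => Filter.liminf (fun k => f k x) Filter.atTop) E ≤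
      Filter.liminf (fun k => panIntegralOn mu (f k) E) Filter.atTop := by
  rw [panIntegralOn, panIntegral]
  refine iSup_le fun n => iSup_le fun A => iSup_le fun hA => iSup_le fun lam =>
    iSup_le fun hle => ?_
  obtain ⟨hAm, hAd, hAu⟩ := hA
  -- basic fact: for x ∈ A i, (lam i : ℝ≥0∞) ≤ E.indicator (liminf) x
  have key : ∀ i, ∀ x ∈ A i,
      (lam i : ℝ≥0∞) ≤ E.indicator (fun x => liminf (fun k => f k x) atTop) x := by
    intro i x hx
    refine le_trans ?_ (hle x)
    refine Finset.single_le_sum (f := fun j => (A j).indicator (fun _ => (lam j : ℝ≥0∞)) x)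
      (fun j _ => zero_le) (Finset.mem_univ i) |>.trans_eq' ?_
    rw [Set.indicator_of_mem hx]
  have hsubE : ∀ i, 0 < lam i → A i ⊆ E := by
    intro i hi x hx
    by_contra hxE
    have := key i x hx
    rw [Set.indicator_of_notMem hxE] at this
    simp only [nonpos_iff_eq_zero, ENNReal.coe_eq_zero] at this
    exact hi.ne' this
  refine ENNReal.le_of_forall_lt_one_mul_le fun c hc => ?_
  induction c using ENNReal.recTopCoe with
  | top => exact absurd hc (by simp)
  | coe c =>
  have hc1 : c < 1 := by exact_mod_cast hc
  -- the sets B i m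
  set B : Fin n → ℕ → Set X := fun i m =>
    A i ∩ E ∩ ⋂ (k : ℕ), ⋂ (_ : m ≤ k), {x | ((c * lam i : ℝ≥0) : ℝ≥0∞) ≤ f k x} with hB
  have hBm : ∀ i m, MeasurableSet (B i m) := by
    intro i m
    refine ((hAm i).inter hE).inter ?_
    exact MeasurableSet.iInter fun k => MeasurableSet.iInter fun _ =>
      measurableSet_le measurable_const (hf k)
  have hBmono : ∀ i, Monotone (B i) := by
    intro i m m' hmm
    refine inter_subset_inter_right _ ?_
    intro x hx
    refine mem_iInter.2 fun k => mem_iInter.2 fun hk => ?_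
    exact mem_iInter.1 (mem_iInter.1 hx k) (hmm.trans hk)
  have hBunion : ∀ i, 0 < lam i → (⋃ m, B i m) = A i := by
    intro i hi
    apply subset_antisymm
    · exact iUnion_subset fun m => (inter_subset_left).trans inter_subset_left
    · intro x hx
      have hxE : x ∈ E := hsubE i hi hx
      have h1 : ((c * lam i : ℝ≥0) : ℝ≥0∞) < liminf (fun k => f k x) atTop := by
        have h2 := key i x hx
        rw [Set.indicator_of_mem hxE] at h2
        refine lt_of_lt_of_le ?_ h2
        rw [ENNReal.coe_lt_coe]
        calc c * lam i < 1 * lam i := by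
              exact mul_lt_mul_of_pos_right hc1 hi
          _ = lam i := one_mul _
      rw [liminf_eq_iSup_iInf_of_nat, lt_iSup_iff] at h1
      obtain ⟨m, hm⟩ := h1
      refine mem_iUnion.2 ⟨m, ⟨⟨hx, hxE⟩, ?_⟩⟩
      refine mem_iInter.2 fun k => mem_iInter.2 fun hk => ?_
      exact le_of_lt (hm.trans_le (iInf_le_of_le k (iInf_le _ hk)))
  -- the lower bound for each k ≥ m
  have hlow : ∀ m k, m ≤ k →
      ∑ i, ((c * lam i : ℝ≥0) : ℝ≥0∞) * mu (B i m) ≤ panIntegralOn mu (f k) E := by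
    intro m k hmk
    rw [panIntegralOn]
    have hpart : IsPanPartition (Fin.snoc (fun i => B i m) ((⋃ i, B i m)ᶜ) : Fin (n+1) → Set X) := by
      refine ⟨?_, ?_, ?_⟩
      · intro i
        induction i using Fin.lastCases with
        | last => rw [Fin.snoc_last]; exact (MeasurableSet.iUnion fun i => hBm i m).compl
        | cast i => rw [Fin.snoc_castSucc]; exact hBm i m
      · intro i j hij
        have hBle : ∀ i, B i m ⊆ A i := fun i => (inter_subset_left).trans inter_subset_left
        induction i using Fin.lastCases with
        | last =>
          induction j using Fin.lastCases with
          | last => exact absurd rfl hij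
          | cast j =>
            rw [Function.onFun, Fin.snoc_last, Fin.snoc_castSucc]
            exact (Set.disjoint_compl_right_iff_subset.2
              (subset_iUnion (fun i => B i m) j)).symm
        | cast i =>
          induction j using Fin.lastCases with
          | last =>
            rw [Function.onFun, Fin.snoc_last, Fin.snoc_castSucc]
            exact Set.disjoint_compl_right_iff_subset.2 (subset_iUnion (fun i => B i m) i)
          | cast j =>
            rw [Function.onFun, Fin.snoc_castSucc, Fin.snoc_castSucc]
            have : i ≠ j := fun h => hij (by rw [h])
            exact (hAd this).mono (hBle i) (hBle j)
      · apply eq_univ_of_forall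
        intro x
        by_cases hx : x ∈ ⋃ i, B i m
        · obtain ⟨i, hi⟩ := mem_iUnion.1 hx
          exact mem_iUnion.2 ⟨i.castSucc, by rwa [Fin.snoc_castSucc]⟩
        · exact mem_iUnion.2 ⟨Fin.last n, by rwa [Fin.snoc_last]⟩
    have hdom : ∀ x, ∑ i : Fin (n+1),
        Set.indicator ((Fin.snoc (fun i => B i m) ((⋃ i, B i m)ᶜ) : Fin (n+1) → Set X) i)
          (fun _ => (((Fin.snoc (fun i => c * lam i) 0 : Fin (n+1) → ℝ≥0) i : ℝ≥0) : ℝ≥0∞)) x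
          ≤ E.indicator (f k) x := by
      intro x
      rw [Fin.sum_univ_castSucc]
      simp only [Fin.snoc_castSucc, Fin.snoc_last, ENNReal.coe_zero]
      have hz : (⋃ i, B i m)ᶜ.indicator (fun _ => (0 : ℝ≥0∞)) x = 0 := by
        simp [Set.indicator]
      rw [hz, add_zero]
      by_cases hx : ∃ i, x ∈ B i m
      · obtain ⟨i, hi⟩ := hx
        have hnot : ∀ j, j ≠ i → x ∉ B j m := by
          intro j hj hxj
          have hBle : ∀ i, B i m ⊆ A i := fun i => (inter_subset_left).trans inter_subset_left
          exact (hAd hj).le_bot ⟨hBle j hxj, hBle i hi⟩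
        rw [Finset.sum_eq_single_of_mem i (Finset.mem_univ i)
          (fun j _ hj => Set.indicator_of_notMem (hnot j hj) _)]
        rw [Set.indicator_of_mem hi, Set.indicator_of_mem hi.1.2]
        exact mem_iInter.1 (mem_iInter.1 hi.2 k) hmk
      · push_neg at hx
        rw [Finset.sum_eq_zero fun j _ => Set.indicator_of_notMem (hx j) _]
        exact zero_le
    refine le_trans ?_ (panIntegral_ge mu _ hpart hdom)
    rw [Fin.sum_univ_castSucc]
    simp [Fin.snoc_castSucc, Fin.snoc_last]
  have hS : ∀ m, ∑ i, ((c * lam i : ℝ≥0) : ℝ≥0∞) * mu (B i m) ≤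
      liminf (fun k => panIntegralOn mu (f k) E) atTop := by
    intro m
    exact le_liminf_of_le (h := Filter.eventually_atTop.2 ⟨m, fun k hk => hlow m k hk⟩)
  have htend : Tendsto (fun m => ∑ i, ((c * lam i : ℝ≥0) : ℝ≥0∞) * mu (B i m)) atTop
      (𝓝 (∑ i, ((c * lam i : ℝ≥0) : ℝ≥0∞) * mu (A i))) := by
    refine tendsto_finset_sum _ fun i _ => ?_
    rcases eq_zero_or_pos (lam i) with h0 | hpos
    · simp [h0]
    · have := ENNReal.Tendsto.const_mul (a := ((c * lam i : ℝ≥0) : ℝ≥0∞))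
        (hcb (B i) (fun m => hBm i m) (hBmono i)) (Or.inr ENNReal.coe_ne_top)
      rwa [hBunion i hpos] at this
  have hT : ∑ i, ((c * lam i : ℝ≥0) : ℝ≥0∞) * mu (A i) ≤
      liminf (fun k => panIntegralOn mu (f k) E) atTop :=
    le_of_tendsto htend (Filter.Eventually.of_forall hS)
  calc (c : ℝ≥0∞) * ∑ i, (lam i : ℝ≥0∞) * mu (A i)
      = ∑ i, ((c * lam i : ℝ≥0) : ℝ≥0∞) * mu (A i) := by
        rw [Finset.mul_sum]
        exact Finset.sum_congr rfl fun i _ => by rw [ENNReal.coe_mul, mul_assoc]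
    _ ≤ _ := hT
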